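/- Let π ∈ S_n with n = s+r, s > r ≥ 1, LIS(π) = 2, LDS(π) = s, and inv(π) = C(s,2)+C(r,2)+Δ with Δ < r. Then π cannot simultaneously agree with both minimal permutations on their respective fixed blocks: if π(i) = r+1−i for some 1 ≤ i ≤ r, then π does not arise from the minimal permutation (s,...,1,s+r,...,s+1) by a jump partition of size Δ. -/

import Mathlib

/-- The number of inversions of a permutation of `Fin n`:
pairs of positions `i < j` with `π i > π j`. -/
def invCount {n : ℕ} (π : Equiv.Perm (Fin n)) : ℕ :=
  (Finset.univ.filter fun p : Fin n × Fin n => p.1 < p.2 ∧ π p.2 < π p.1).card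

/-- The length of the longest (strictly) increasing subsequence of `π`. -/
noncomputable def lisLen {n : ℕ} (π : Equiv.Perm (Fin n)) : ℕ :=
  sSup {k | ∃ t : Finset (Fin n), t.card = k ∧ StrictMonoOn ⇑π ↑t}

/-- The length of the longest (strictly) decreasing subsequence of `π`. -/
noncomputable def ldsLen {n : ℕ} (π : Equiv.Perm (Fin n)) : ℕ :=
  sSup {k | ∃ t : Finset (Fin n), t.card = k ∧ StrictAntiOn ⇑π ↑t}

/-- The adjacent transposition `s_a` (1-indexed, as in the paper): it swaps
the entries at positions `a` and `a+1` of the one-line notation, i.e. the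
0-indexed positions `a-1` and `a`; it is the identity if out of range. -/
def adjT (n a : ℕ) : Equiv.Perm (Fin n) :=
  if h : 0 < a ∧ a < n then Equiv.swap ⟨a - 1, by omega⟩ ⟨a, h.2⟩ else 1

/-- The ascending word `s_a s_{a+1} ⋯ s_{a+m-1}`. -/
def ascWord (n a m : ℕ) : Equiv.Perm (Fin n) :=
  ((List.range m).map fun t => adjT n (a + t)).prod

/-- The descending word `s_{a+m-1} ⋯ s_{a+1} s_a`. -/
def descWord (n a m : ℕ) : Equiv.Perm (Fin n) :=
  ((List.range m).map fun t => adjT n (a + t)).reverse.prod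

/-- The word of adjacent transpositions realizing the inner jump action of a
single partition `μ` at the block boundary `b = c_i^*` (Definition 3.1):
`(s_b ⋯ s_{b-1+μ₁}) (s_{b-1} ⋯ s_{b-2+μ₂}) ⋯ (s_{b-ℓ+1} ⋯ s_{b-ℓ+μ_ℓ})`,
acting by right multiplication. -/
def innerBlockWord (n b : ℕ) (μ : List ℕ) : Equiv.Perm (Fin n) :=
  ((List.range μ.length).map fun j => ascWord n (b - j) (μ.getD j 0)).prod

/-- The word of adjacent transpositions realizing the outer jump action of a
single partition `ν` at the block boundary `b = c_i^*` (Definition 3.3):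
`(s_{b-1+ν₁} ⋯ s_b) (s_{b-2+ν₂} ⋯ s_{b-1}) ⋯ (s_{b-ℓ+ν_ℓ} ⋯ s_{b-ℓ+1})`,
acting by left multiplication. -/
def outerBlockWord (n b : ℕ) (ν : List ℕ) : Equiv.Perm (Fin n) :=
  ((List.range ν.length).map fun j => descWord n (b - j) (ν.getD j 0)).prod

/-- The word realizing the inner jump action of a sequence of partitions
`μs = (μ⁽¹⁾, …)`, the `i`-th acting at the boundary `c_i^* = c₁ + ⋯ + c_i`. -/
def innerWord (n : ℕ) (c : List ℕ) (μs : List (List ℕ)) : Equiv.Perm (Fin n) :=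
  ((List.range μs.length).map fun i =>
    innerBlockWord n ((c.take (i + 1)).sum) (μs.getD i [])).prod

/-- The word realizing the outer jump action of a sequence of partitions. -/
def outerWord (n : ℕ) (c : List ℕ) (νs : List (List ℕ)) : Equiv.Perm (Fin n) :=
  ((List.range νs.length).map fun i =>
    outerBlockWord n ((c.take (i + 1)).sum) (νs.getD i [])).prod

open Equiv Finset

namespace Stmt18

variable {n : ℕ}

/-- Swapping two adjacent indices preserves strict order of any other pair. -/
lemma swap_lt_swap {i j a b : Fin n} (hij : (i:ℕ) + 1 = (j:ℕ)) (hab : a < b)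
    (hne : ¬(a = i ∧ b = j)) : Equiv.swap i j a < Equiv.swap i j b := by
  have hab' : (a:ℕ) < (b:ℕ) := hab
  rw [Fin.lt_def]
  rcases eq_or_ne a i with rfl | hai
  · rcases eq_or_ne b j with rfl | hbj
    · exact absurd ⟨rfl, rfl⟩ hne
    · have hbi : b ≠ a := by intro h; rw [h] at hab'; omega
      rw [Equiv.swap_apply_left, Equiv.swap_apply_of_ne_of_ne hbi hbj]
      have h2 : (b:ℕ) ≠ (j:ℕ) := fun h => hbj (Fin.ext h)
      omega
  · rcases eq_or_ne a j with rfl | haj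
    · have hbj : b ≠ a := by intro h; rw [h] at hab'; omega
      have hbi : b ≠ i := by
        intro h
        have : (b:ℕ) = (i:ℕ) := by rw [h]
        omega
      rw [Equiv.swap_apply_right, Equiv.swap_apply_of_ne_of_ne hbi hbj]
      omega
    · rw [Equiv.swap_apply_of_ne_of_ne hai haj]
      rcases eq_or_ne b i with rfl | hbi
      · rw [Equiv.swap_apply_left]
        omega
      · rcases eq_or_ne b j with rfl | hbj
        · rw [Equiv.swap_apply_right]
          have h1 : (a:ℕ) ≠ (i:ℕ) := fun h => hai (Fin.ext h)
          omega
        · rw [Equiv.swap_apply_of_ne_of_ne hbi hbj]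
          omega

lemma invCount_inv (σ : Equiv.Perm (Fin n)) : invCount σ⁻¹ = invCount σ := by
  classical
  unfold invCount
  apply Finset.card_bij' (fun p _ => ((σ⁻¹ p.2 : Fin n), (σ⁻¹ p.1 : Fin n)))
    (fun p _ => ((σ p.2 : Fin n), (σ p.1 : Fin n)))
  · intro p hp
    simp only [Finset.mem_filter, Finset.mem_univ, true_and] at hp ⊢
    exact ⟨hp.2, by simpa using hp.1⟩
  · intro p hp
    simp only [Finset.mem_filter, Finset.mem_univ, true_and] at hp ⊢
    exact ⟨hp.2, by simpa using hp.1⟩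
  · intro p hp; simp
  · intro p hp; simp

lemma invCount_mul_swap (σ : Equiv.Perm (Fin n)) {i j : Fin n} (hij : (i:ℕ) + 1 = (j:ℕ))
    (h : σ i < σ j) : invCount (σ * Equiv.swap i j) = invCount σ + 1 := by
  classical
  have hijlt : i < j := Fin.lt_def.mpr (by omega)
  have hS : (Finset.univ.filter fun p : Fin n × Fin n =>
        p.1 < p.2 ∧ (σ * Equiv.swap i j) p.2 < (σ * Equiv.swap i j) p.1)
      = insert (i, j) ((Finset.univ.filter fun p : Fin n × Fin n =>
          p.1 < p.2 ∧ σ p.2 < σ p.1).image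
          fun p => (Equiv.swap i j p.1, Equiv.swap i j p.2)) := by
    ext p
    simp only [Finset.mem_filter, Finset.mem_insert, Finset.mem_image, Finset.mem_univ,
      true_and]
    simp only [Equiv.Perm.mul_apply]
    constructor
    · rintro ⟨h1, h2⟩
      by_cases hp : p = (i, j)
      · exact Or.inl hp
      · refine Or.inr ⟨(Equiv.swap i j p.1, Equiv.swap i j p.2), ⟨?_, h2⟩, ?_⟩
        · apply swap_lt_swap hij h1
          rintro ⟨e1, e2⟩
          exact hp (Prod.ext e1 e2)
        · simp
    · rintro (rfl | ⟨q, ⟨hq1, hq2⟩, rfl⟩)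
      · refine ⟨hijlt, ?_⟩
        rw [Equiv.swap_apply_left, Equiv.swap_apply_right]
        exact h
      · constructor
        · apply swap_lt_swap hij hq1
          rintro ⟨rfl, rfl⟩
          exact absurd hq2 (asymm h)
        · simpa using hq2
  rw [invCount, hS, Finset.card_insert_of_notMem, Finset.card_image_of_injective, invCount]
  · intro p q hpq
    simp only [Prod.mk.injEq] at hpq
    exact Prod.ext (Equiv.injective _ hpq.1) (Equiv.injective _ hpq.2)
  · intro hmem
    rcases Finset.mem_image.mp hmem with ⟨q, hq, he⟩
    simp only [Prod.mk.injEq] at he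
    rcases he with ⟨e1, e2⟩
    have hq1 : q.1 = j := by
      have := congrArg (Equiv.swap i j) e1
      simpa [Equiv.swap_apply_self, Equiv.swap_apply_left] using this
    have hq2 : q.2 = i := by
      have := congrArg (Equiv.swap i j) e2
      simpa [Equiv.swap_apply_self, Equiv.swap_apply_right] using this
    rcases Finset.mem_filter.mp hq with ⟨-, hlt, -⟩
    rw [hq1, hq2] at hlt
    exact absurd hlt (asymm hijlt)

lemma invCount_mul_swap' (σ : Equiv.Perm (Fin n)) {i j : Fin n} (hij : (i:ℕ) + 1 = (j:ℕ))
    (h : σ j < σ i) : invCount σ = invCount (σ * Equiv.swap i j) + 1 := by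
  have hcond : (σ * Equiv.swap i j) i < (σ * Equiv.swap i j) j := by
    simpa [Equiv.Perm.mul_apply, Equiv.swap_apply_left, Equiv.swap_apply_right] using h
  have := invCount_mul_swap (σ * Equiv.swap i j) hij hcond
  rwa [mul_assoc, Equiv.swap_mul_self, mul_one] at this

lemma invCount_swap_mul (σ : Equiv.Perm (Fin n)) {i j : Fin n} (hij : (i:ℕ) + 1 = (j:ℕ))
    (h : σ⁻¹ i < σ⁻¹ j) : invCount (Equiv.swap i j * σ) = invCount σ + 1 := by
  rw [← invCount_inv (Equiv.swap i j * σ), mul_inv_rev, Equiv.swap_inv,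
    invCount_mul_swap σ⁻¹ hij h, invCount_inv]

lemma invCount_swap_mul' (σ : Equiv.Perm (Fin n)) {i j : Fin n} (hij : (i:ℕ) + 1 = (j:ℕ))
    (h : σ⁻¹ j < σ⁻¹ i) : invCount σ = invCount (Equiv.swap i j * σ) + 1 := by
  have hcond : (Equiv.swap i j * σ)⁻¹ i < (Equiv.swap i j * σ)⁻¹ j := by
    simp only [mul_inv_rev, Equiv.swap_inv, Equiv.Perm.mul_apply]
    rwa [Equiv.swap_apply_left, Equiv.swap_apply_right]
  have := invCount_swap_mul (Equiv.swap i j * σ) hij hcond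
  rwa [← mul_assoc, Equiv.swap_mul_self, one_mul] at this

end Stmt18

namespace Stmt18

/-- Penalty: how far left of position `s-1-v` each value `v` sits. -/
def Pw (s : ℕ) {n : ℕ} (σ : Equiv.Perm (Fin n)) : ℕ :=
  ∑ v : Fin n, (s - 1 - (v : ℕ) - ((σ⁻¹ v : Fin n) : ℕ))

/-- Potential function. -/
def Phi (s : ℕ) {n : ℕ} (σ : Equiv.Perm (Fin n)) : ℕ := invCount σ + 2 * Pw s σ

lemma sum_two_points_le (f g : Fin n → ℕ) (x y : Fin n) (hxy : x ≠ y) (c : ℕ)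
    (hfg : ∀ v, v ≠ x → v ≠ y → g v = f v)
    (hkey : g x + g y ≤ f x + f y + c) :
    (∑ v, g v) ≤ (∑ v, f v) + c := by
  classical
  have hsub : ({x, y} : Finset (Fin n)) ⊆ Finset.univ := Finset.subset_univ _
  rw [← Finset.sum_sdiff hsub, ← Finset.sum_sdiff hsub (f := f)]
  have hpair : ∀ h : Fin n → ℕ, (∑ v ∈ ({x, y} : Finset (Fin n)), h v) = h x + h y := by
    intro h; rw [Finset.sum_pair hxy]
  have heq : (∑ v ∈ Finset.univ \ {x, y}, g v) = ∑ v ∈ Finset.univ \ {x, y}, f v := by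
    apply Finset.sum_congr rfl
    intro v hv
    rw [Finset.mem_sdiff, Finset.mem_insert, Finset.mem_singleton] at hv
    push_neg at hv
    exact hfg v hv.2.1 hv.2.2
  rw [hpair g, hpair f, heq]
  omega

lemma phi_mul_swap_le (s : ℕ) (σ : Equiv.Perm (Fin n)) {i j : Fin n}
    (hij : (i:ℕ) + 1 = (j:ℕ)) : Phi s (σ * Equiv.swap i j) ≤ Phi s σ + 1 := by
  classical
  have hne : i ≠ j := by intro h; rw [h] at hij; omega
  have hxy : σ i ≠ σ j := fun h => hne (σ.injective h)
  have happ : ∀ v : Fin n, ((σ * Equiv.swap i j)⁻¹ v) = Equiv.swap i j (σ⁻¹ v) := by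
    intro v; rw [mul_inv_rev, Equiv.swap_inv]; rfl
  have hPx : (σ * Equiv.swap i j)⁻¹ (σ i) = j := by
    rw [happ, Equiv.Perm.inv_def, Equiv.symm_apply_apply, Equiv.swap_apply_left]
  have hPy : (σ * Equiv.swap i j)⁻¹ (σ j) = i := by
    rw [happ, Equiv.Perm.inv_def, Equiv.symm_apply_apply, Equiv.swap_apply_right]
  have hPother : ∀ v, v ≠ σ i → v ≠ σ j → (σ * Equiv.swap i j)⁻¹ v = σ⁻¹ v := by
    intro v h1 h2
    rw [happ]
    apply Equiv.swap_apply_of_ne_of_ne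
    · intro h; exact h1 (by rw [← h, Equiv.Perm.inv_def, Equiv.apply_symm_apply])
    · intro h; exact h2 (by rw [← h, Equiv.Perm.inv_def, Equiv.apply_symm_apply])
  have hPboth : ∀ c : ℕ,
      (s - 1 - ((σ i : Fin n):ℕ) - (j:ℕ)) + (s - 1 - ((σ j : Fin n):ℕ) - (i:ℕ)) ≤
        (s - 1 - ((σ i : Fin n):ℕ) - (i:ℕ)) + (s - 1 - ((σ j : Fin n):ℕ) - (j:ℕ)) + c →
      Pw s (σ * Equiv.swap i j) ≤ Pw s σ + c := by
    intro c hkey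
    apply sum_two_points_le _ _ (σ i) (σ j) hxy
    · intro v h1 h2; rw [hPother v h1 h2]
    · rw [hPx, hPy]; simp only [Equiv.Perm.inv_def, Equiv.symm_apply_apply]; exact hkey
  rcases lt_or_gt_of_ne hxy with hlt | hgt
  · have hinv := invCount_mul_swap σ hij hlt
    have hlt' : ((σ i : Fin n):ℕ) < ((σ j : Fin n):ℕ) := hlt
    have hP : Pw s (σ * Equiv.swap i j) ≤ Pw s σ + 0 := hPboth 0 (by omega)
    unfold Phi; omega
  · have hinv := invCount_mul_swap' σ hij hgt
    have hP : Pw s (σ * Equiv.swap i j) ≤ Pw s σ + 1 := hPboth 1 (by omega)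
    unfold Phi; omega

lemma phi_swap_mul_le (s : ℕ) (σ : Equiv.Perm (Fin n)) {i j : Fin n}
    (hij : (i:ℕ) + 1 = (j:ℕ)) : Phi s (Equiv.swap i j * σ) ≤ Phi s σ + 1 := by
  classical
  have hne : i ≠ j := by intro h; rw [h] at hij; omega
  have happ : ∀ v : Fin n, ((Equiv.swap i j * σ)⁻¹ v) = σ⁻¹ (Equiv.swap i j v) := by
    intro v; rw [mul_inv_rev, Equiv.swap_inv]; rfl
  have hPx : (Equiv.swap i j * σ)⁻¹ i = σ⁻¹ j := by rw [happ, Equiv.swap_apply_left]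
  have hPy : (Equiv.swap i j * σ)⁻¹ j = σ⁻¹ i := by rw [happ, Equiv.swap_apply_right]
  have hPother : ∀ v, v ≠ i → v ≠ j → (Equiv.swap i j * σ)⁻¹ v = σ⁻¹ v := by
    intro v h1 h2
    rw [happ, Equiv.swap_apply_of_ne_of_ne h1 h2]
  have hPboth : ∀ c : ℕ,
      (s - 1 - (i:ℕ) - ((σ⁻¹ j : Fin n):ℕ)) + (s - 1 - (j:ℕ) - ((σ⁻¹ i : Fin n):ℕ)) ≤
        (s - 1 - (i:ℕ) - ((σ⁻¹ i : Fin n):ℕ)) + (s - 1 - (j:ℕ) - ((σ⁻¹ j : Fin n):ℕ)) + c →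
      Pw s (Equiv.swap i j * σ) ≤ Pw s σ + c := by
    intro c hkey
    apply sum_two_points_le _ _ i j hne
    · intro v h1 h2; rw [hPother v h1 h2]
    · rw [hPx, hPy]; exact hkey
  have hxy : σ⁻¹ i ≠ σ⁻¹ j := fun h => hne (σ⁻¹.injective h)
  rcases lt_or_gt_of_ne hxy with hlt | hgt
  · have hinv := invCount_swap_mul σ hij hlt
    have hlt' : ((σ⁻¹ i : Fin n):ℕ) < ((σ⁻¹ j : Fin n):ℕ) := hlt
    have hP : Pw s (Equiv.swap i j * σ) ≤ Pw s σ + 0 := hPboth 0 (by omega)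
    unfold Phi; omega
  · have hinv := invCount_swap_mul' σ hij hgt
    have hP : Pw s (Equiv.swap i j * σ) ≤ Pw s σ + 1 := hPboth 1 (by omega)
    unfold Phi; omega

lemma phi_mul_adjT_le (s : ℕ) (σ : Equiv.Perm (Fin n)) (a : ℕ) :
    Phi s (σ * adjT n a) ≤ Phi s σ + 1 := by
  unfold adjT
  split_ifs with h
  · exact phi_mul_swap_le s σ (by simp; omega)
  · simp

lemma phi_adjT_mul_le (s : ℕ) (σ : Equiv.Perm (Fin n)) (a : ℕ) :
    Phi s (adjT n a * σ) ≤ Phi s σ + 1 := by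
  unfold adjT
  split_ifs with h
  · exact phi_swap_mul_le s σ (by simp; omega)
  · simp

end Stmt18

namespace Stmt18

lemma ascWord_succ (n a m : ℕ) :
    ascWord n a (m + 1) = ascWord n a m * adjT n (a + m) := by
  unfold ascWord
  rw [List.range_succ, List.map_append, List.prod_append]
  simp

lemma descWord_succ (n a m : ℕ) :
    descWord n a (m + 1) = adjT n (a + m) * descWord n a m := by
  unfold descWord
  rw [List.range_succ, List.map_append, List.reverse_append, List.prod_append]
  simp

lemma phi_mul_ascWord_le (s : ℕ) (σ : Equiv.Perm (Fin n)) (a m : ℕ) :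
    Phi s (σ * ascWord n a m) ≤ Phi s σ + m := by
  induction m with
  | zero => simp [ascWord]
  | succ m ih =>
    rw [ascWord_succ, ← mul_assoc]
    calc Phi s (σ * ascWord n a m * adjT n (a + m))
        ≤ Phi s (σ * ascWord n a m) + 1 := phi_mul_adjT_le s _ _
      _ ≤ Phi s σ + m + 1 := by omega

lemma phi_descWord_mul_le (s : ℕ) (σ : Equiv.Perm (Fin n)) (a m : ℕ) :
    Phi s (descWord n a m * σ) ≤ Phi s σ + m := by
  induction m generalizing σ with
  | zero => simp [descWord]
  | succ m ih =>
    rw [descWord_succ, mul_assoc]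
    calc Phi s (adjT n (a + m) * (descWord n a m * σ))
        ≤ Phi s (descWord n a m * σ) + 1 := phi_adjT_mul_le s _ _
      _ ≤ Phi s σ + m + 1 := by have := ih σ; omega

lemma sum_getD (l : List ℕ) : (∑ j ∈ Finset.range l.length, l.getD j 0) = l.sum := by
  induction l with
  | nil => simp
  | cons a t ih =>
    rw [List.length_cons, Finset.sum_range_succ', List.sum_cons]
    simp only [List.getD_cons_succ, List.getD_cons_zero]
    omega

lemma phi_mul_innerBlock_le (s : ℕ) (σ : Equiv.Perm (Fin n)) (b : ℕ) (μ : List ℕ) :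
    Phi s (σ * innerBlockWord n b μ) ≤ Phi s σ + μ.sum := by
  have key : ∀ k, Phi s (σ * (((List.range k).map fun j =>
      ascWord n (b - j) (μ.getD j 0)).prod)) ≤ Phi s σ + ∑ j ∈ Finset.range k, μ.getD j 0 := by
    intro k
    induction k with
    | zero => simp
    | succ k ih =>
      rw [List.range_succ, List.map_append, List.prod_append]
      simp only [List.map_cons, List.map_nil, List.prod_cons, List.prod_nil, mul_one]
      rw [← mul_assoc, Finset.sum_range_succ]
      calc Phi s (σ * ((List.range k).map fun j => ascWord n (b - j) (μ.getD j 0)).prod *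
            ascWord n (b - k) (μ.getD k 0))
          ≤ Phi s (σ * ((List.range k).map fun j => ascWord n (b - j) (μ.getD j 0)).prod)
              + μ.getD k 0 := phi_mul_ascWord_le s _ _ _
        _ ≤ Phi s σ + ((∑ j ∈ Finset.range k, μ.getD j 0) + μ.getD k 0) := by omega
  have := key μ.length
  rw [sum_getD] at this
  exact this

lemma phi_outerBlock_mul_le (s : ℕ) (σ : Equiv.Perm (Fin n)) (b : ℕ) (ν : List ℕ) :
    Phi s (outerBlockWord n b ν * σ) ≤ Phi s σ + ν.sum := by
  have key : ∀ k σ', Phi s ((((List.range k).map fun j =>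
      descWord n (b - j) (ν.getD j 0)).prod) * σ') ≤
        Phi s σ' + ∑ j ∈ Finset.range k, ν.getD j 0 := by
    intro k
    induction k with
    | zero => simp
    | succ k ih =>
      intro σ'
      rw [List.range_succ, List.map_append, List.prod_append]
      simp only [List.map_cons, List.map_nil, List.prod_cons, List.prod_nil, mul_one]
      rw [mul_assoc, Finset.sum_range_succ]
      calc Phi s (((List.range k).map fun j => descWord n (b - j) (ν.getD j 0)).prod *
            (descWord n (b - k) (ν.getD k 0) * σ'))
          ≤ Phi s (descWord n (b - k) (ν.getD k 0) * σ') + ∑ j ∈ Finset.range k, ν.getD j 0 :=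
            ih _
        _ ≤ Phi s σ' + ((∑ j ∈ Finset.range k, ν.getD j 0) + ν.getD k 0) := by
            have := phi_descWord_mul_le s σ' (b - k) (ν.getD k 0); omega
  have := key ν.length σ
  rw [sum_getD] at this
  exact this

end Stmt18

namespace Stmt18

lemma card_ltpairs (m : ℕ) :
    ((Finset.range m ×ˢ Finset.range m).filter fun q : ℕ × ℕ => q.1 < q.2).card
      = m.choose 2 := by
  rw [Finset.card_filter, Finset.sum_product_right]
  have hin : ∀ b ∈ Finset.range m,
      (∑ a ∈ Finset.range m, if (a, b).1 < (a, b).2 then 1 else 0) = b := by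
    intro b hb
    rw [Finset.mem_range] at hb
    rw [← Finset.card_filter]
    have : (Finset.range m).filter (fun a => (a, b).1 < (a, b).2) = Finset.range b := by
      ext x
      simp only [Finset.mem_filter, Finset.mem_range]
      omega
    rw [this, Finset.card_range]
  rw [Finset.sum_congr rfl hin, Finset.sum_range_id, Nat.choose_two_right]

lemma invCount_pi1_le (s r : ℕ) (π₁ : Equiv.Perm (Fin (s + r)))
    (hπ₁ : ∀ k : Fin (s + r), (π₁ k : ℕ) =
      if (k : ℕ) < s then s - 1 - (k : ℕ) else 2 * s + r - 1 - (k : ℕ)) :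
    invCount π₁ ≤ s.choose 2 + r.choose 2 := by
  classical
  set S1 := Finset.univ.filter fun p : Fin (s + r) × Fin (s + r) =>
    (p.1 : ℕ) < (p.2 : ℕ) ∧ (p.2 : ℕ) < s with hS1
  set S2 := Finset.univ.filter fun p : Fin (s + r) × Fin (s + r) =>
    s ≤ (p.1 : ℕ) ∧ (p.1 : ℕ) < (p.2 : ℕ) with hS2
  have hsub : (Finset.univ.filter fun p : Fin (s + r) × Fin (s + r) =>
      p.1 < p.2 ∧ π₁ p.2 < π₁ p.1) ⊆ S1 ∪ S2 := by
    intro p hp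
    rw [Finset.mem_filter] at hp
    rcases hp with ⟨-, hlt, hvp⟩
    have h1 := hπ₁ p.1
    have h2 := hπ₁ p.2
    have hlt' : (p.1 : ℕ) < (p.2 : ℕ) := hlt
    have hvp' : ((π₁ p.2 : Fin (s + r)) : ℕ) < ((π₁ p.1 : Fin (s + r)) : ℕ) := hvp
    have hb1 : (p.1 : ℕ) < s + r := p.1.isLt
    have hb2 : (p.2 : ℕ) < s + r := p.2.isLt
    rw [Finset.mem_union, hS1, hS2]
    simp only [Finset.mem_filter, Finset.mem_univ, true_and]
    rw [h1, h2] at hvp'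
    split_ifs at hvp' <;> omega
  have hc1 : S1.card ≤ s.choose 2 := by
    rw [← card_ltpairs s]
    apply Finset.card_le_card_of_injOn (fun p => ((p.1 : ℕ), (p.2 : ℕ)))
    · intro p hp
      rw [hS1, Finset.mem_coe, Finset.mem_filter] at hp
      simp only [Finset.mem_coe, Finset.mem_filter, Finset.mem_product, Finset.mem_range]
      exact ⟨⟨by omega, hp.2.2⟩, hp.2.1⟩
    · intro p _ q _ h
      simp only [Prod.mk.injEq] at h
      exact Prod.ext (Fin.ext h.1) (Fin.ext h.2)
  have hc2 : S2.card ≤ r.choose 2 := by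
    rw [← card_ltpairs r]
    apply Finset.card_le_card_of_injOn (fun p => ((p.1 : ℕ) - s, (p.2 : ℕ) - s))
    · intro p hp
      rw [hS2, Finset.mem_coe, Finset.mem_filter] at hp
      have hb1 : (p.1 : ℕ) < s + r := p.1.isLt
      have hb2 : (p.2 : ℕ) < s + r := p.2.isLt
      simp only [Finset.mem_coe, Finset.mem_filter, Finset.mem_product, Finset.mem_range]
      omega
    · intro p hp q hq h
      simp only [hS2, Finset.coe_filter, Set.mem_setOf_eq] at hp hq
      simp only [Prod.mk.injEq] at h
      obtain ⟨-, hp1, hp2⟩ := hp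
      obtain ⟨-, hq1, hq2⟩ := hq
      apply Prod.ext <;> apply Fin.ext <;> omega
  calc invCount π₁ ≤ (S1 ∪ S2).card := Finset.card_le_card hsub
    _ ≤ S1.card + S2.card := Finset.card_union_le _ _
    _ ≤ s.choose 2 + r.choose 2 := by omega

end Stmt18


/-- key disjointness claim in Theorem 3.8(ii): if a permutation
`π` of shape `λ' = (s, r)` (with `s > r`) having `Δ < r` extra inversions
satisfies `π(i) = r + 1 - i` for some `1 ≤ i ≤ r` (0-indexed: the value at
position `i - 1` is `r - i`), then `π` does not arise from the minimal
permutation `π₁ = (s, …, 1, s+r, …, s+1)` by applying a jump partition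
`(μ, ν)` of size `Δ` (inner action of `μ` and outer action of `ν` at the
block boundary `s`). -/
theorem stmt_18 (s r Δ : ℕ) (hr : 1 ≤ r) (hrs : r < s) (hΔ : Δ < r)
    (π : Equiv.Perm (Fin (s + r)))
    (hlis : lisLen π = 2) (hlds : ldsLen π = s)
    (hinv : invCount π = s.choose 2 + r.choose 2 + Δ)
    (i : ℕ) (hi1 : 1 ≤ i) (hir : i ≤ r)
    (hfix : ∀ h : i - 1 < s + r, ((π ⟨i - 1, h⟩ : Fin (s + r)) : ℕ) = r - i) :
    ∀ π₁ : Equiv.Perm (Fin (s + r)),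
      (∀ k : Fin (s + r), (π₁ k : ℕ) =
        if (k : ℕ) < s then s - 1 - (k : ℕ) else 2 * s + r - 1 - (k : ℕ)) →
      ¬ ∃ μ ν : List ℕ,
          μ.Pairwise (· ≥ ·) ∧ (∀ x ∈ μ, 0 < x) ∧
          ν.Pairwise (· ≥ ·) ∧ (∀ x ∈ ν, 0 < x) ∧
          μ.length ≤ s ∧ μ.headD 0 < r ∧
          ν.length ≤ s ∧ ν.headD 0 < r ∧
          μ.sum + ν.sum = Δ ∧
          π = outerBlockWord (s + r) s ν * π₁ * innerBlockWord (s + r) s μ := by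
  intro π₁ hπ₁
  rintro ⟨μ, ν, -, -, -, -, -, -, -, -, hsum, hfac⟩
  -- Step 1: the potential only grows by at most Δ along the word.
  have hchain : Stmt18.Phi s π ≤ Stmt18.Phi s π₁ + Δ := by
    rw [hfac, mul_assoc]
    calc Stmt18.Phi s (outerBlockWord (s + r) s ν * (π₁ * innerBlockWord (s + r) s μ))
        ≤ Stmt18.Phi s (π₁ * innerBlockWord (s + r) s μ) + ν.sum :=
          Stmt18.phi_outerBlock_mul_le s _ s ν
      _ ≤ Stmt18.Phi s π₁ + μ.sum + ν.sum := by
          have := Stmt18.phi_mul_innerBlock_le s π₁ s μ; omega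
      _ = Stmt18.Phi s π₁ + Δ := by omega
  -- Step 2: the potential of π₁.
  have hPπ₁ : Stmt18.Pw s π₁ = 0 := by
    apply Finset.sum_eq_zero
    intro v _
    have happ : π₁ (π₁⁻¹ v) = v := Equiv.apply_symm_apply π₁ v
    have hform := hπ₁ (π₁⁻¹ v)
    rw [happ] at hform
    have hun : ((π₁⁻¹ v : Fin (s + r)) : ℕ) < s + r := (π₁⁻¹ v).isLt
    split_ifs at hform <;> omega
  have hπ₁inv := Stmt18.invCount_pi1_le s r π₁ hπ₁
  -- Step 3: the potential of π is large because of the fixed small value.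
  have hlt : i - 1 < s + r := by omega
  have hv := hfix hlt
  have hPπ : s - r ≤ Stmt18.Pw s π := by
    have hinv0 : π⁻¹ (π ⟨i - 1, hlt⟩) = ⟨i - 1, hlt⟩ := Equiv.symm_apply_apply π _
    have hterm : s - r ≤ s - 1 - ((π ⟨i - 1, hlt⟩ : Fin (s + r)) : ℕ)
        - ((π⁻¹ (π ⟨i - 1, hlt⟩) : Fin (s + r)) : ℕ) := by
      rw [hinv0, hv]
      simp only []
      omega
    calc s - r ≤ _ := hterm
      _ ≤ Stmt18.Pw s π :=
        Finset.single_le_sum (f := fun v : Fin (s + r) =>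
          s - 1 - (v : ℕ) - ((π⁻¹ v : Fin (s + r)) : ℕ))
          (fun _ _ => Nat.zero_le _) (Finset.mem_univ _)
  -- Step 4: contradiction.
  have h1 : Stmt18.Phi s π = invCount π + 2 * Stmt18.Pw s π := rfl
  have h2 : Stmt18.Phi s π₁ = invCount π₁ + 2 * Stmt18.Pw s π₁ := rfl
  omega
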